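/- Let p, ν ∈ ℕ with ν ≥ 1. For every τ ∈ (−1,1), the p-th derivative of q_ν satisfies q_ν^{(p)}(τ) = (1/2)·P_ν^{(p)}(τ)·log((1+τ)/(1−τ)) + (1/2)·Σ_{i=1}^{p} binom(p,i)·(i−1)!·((−1)^{i−1}·(1+τ)^{−i} + (1−τ)^{−i})·P_ν^{(p−i)}(τ) − W_{ν−1}^{(p)}(τ). -/

import Mathlib

/-- The Legendre polynomial `P_ν` via the Rodrigues formula. -/
noncomputable def legendreP (ν : ℕ) (τ : ℝ) : ℝ :=
  ((-1 : ℝ) ^ ν / (2 ^ ν * Nat.factorial ν)) *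
    iteratedDeriv ν (fun t : ℝ => (1 - t ^ 2) ^ ν) τ

/-- The polynomial `W_{ν-1}` (with `W_{-1} = 0`): `legendreW ν` denotes `W_{ν-1}`. -/
noncomputable def legendreW (ν : ℕ) (τ : ℝ) : ℝ :=
  if ν = 0 then 0 else
    ∑ i ∈ Finset.range ((ν - 1) / 2 + 1),
      ((2 * (ν : ℝ) - 4 * (i : ℝ) - 1) / (((ν : ℝ) - (i : ℝ)) * (2 * (i : ℝ) + 1))) *
        legendreP (ν - 2 * i - 1) τ

/-- The Legendre function of the second kind `q_ν` on `(-1,1)`. -/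
noncomputable def legendreQ (ν : ℕ) (τ : ℝ) : ℝ :=
  (1 / 2) * legendreP ν τ * Real.log ((1 + τ) / (1 - τ)) - legendreW ν τ


open Set Filter Finset Topology
open scoped ContDiff

lemma iteratedDerivWithin_of_isOpen' {s : Set ℝ} (hs : IsOpen s) (f : ℝ → ℝ) (n : ℕ)
    {x : ℝ} (hx : x ∈ s) : iteratedDerivWithin n f s x = iteratedDeriv n f x := by
  simp [iteratedDerivWithin, iteratedDeriv, iteratedFDerivWithin_of_isOpen n hs hx]

lemma contDiff_legendreP (ν : ℕ) : ContDiff ℝ ∞ (legendreP ν) := by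
  have h : ContDiff ℝ ∞ (fun t : ℝ => (1 - t ^ 2) ^ ν) :=
    (contDiff_const.sub (contDiff_id.pow 2)).pow ν
  have h2 := h.iterate_deriv ν
  unfold legendreP
  simp only [iteratedDeriv_eq_iterate]
  exact contDiff_const.mul h2

lemma contDiff_legendreW (ν : ℕ) : ContDiff ℝ ∞ (legendreW ν) := by
  by_cases h : ν = 0
  · subst h; unfold legendreW; simp only [if_pos rfl]; exact contDiff_const
  · unfold legendreW; simp only [if_neg h]
    exact ContDiff.sum fun i _ => contDiff_const.mul (contDiff_legendreP _)

-- differentiability of iterated derivs of locally smooth functions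
lemma diffAt_iteratedDeriv {s : Set ℝ} (hs : IsOpen s) {g : ℝ → ℝ}
    (hg : ContDiffOn ℝ ∞ g s) (k : ℕ) {x : ℝ} (hx : x ∈ s) :
    DifferentiableAt ℝ (iteratedDeriv k g) x := by
  have hd : DifferentiableOn ℝ (iteratedDerivWithin k g s) s :=
    hg.differentiableOn_iteratedDerivWithin (by exact_mod_cast WithTop.coe_lt_top _) hs.uniqueDiffOn
  have he : iteratedDerivWithin k g s =ᶠ[𝓝 x] iteratedDeriv k g :=
    Filter.eventuallyEq_of_mem (hs.mem_nhds hx) fun y hy =>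
      iteratedDerivWithin_of_isOpen' hs g k hy
  exact he.differentiableAt_iff.mp ((hd x hx).differentiableAt (hs.mem_nhds hx))

lemma iter_log_add : ∀ (i : ℕ) (τ : ℝ), -1 < τ →
    iteratedDeriv (i + 1) (fun t => Real.log (1 + t)) τ
      = (-1 : ℝ) ^ i * (Nat.factorial i : ℝ) * (1 + τ) ^ (-(i + 1) : ℤ) := by
  intro i
  induction i with
  | zero =>
    intro τ hτ
    have h0 : (1 : ℝ) + τ ≠ 0 := by linarith
    have h : HasDerivAt (fun t : ℝ => Real.log (1 + t)) (1 / (1 + τ)) τ := by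
      simpa using (((hasDerivAt_id τ).const_add 1).log h0)
    rw [iteratedDeriv_one, h.deriv]
    simp [zpow_neg]
  | succ i ih =>
    intro τ hτ
    have he : iteratedDeriv (i + 1) (fun t => Real.log (1 + t)) =ᶠ[𝓝 τ]
        fun t => (-1 : ℝ) ^ i * (Nat.factorial i : ℝ) * (1 + t) ^ (-(i + 1) : ℤ) := by
      filter_upwards [Ioi_mem_nhds hτ] with y hy
      exact ih y hy
    rw [iteratedDeriv_succ, he.deriv_eq]
    have h0 : (1 : ℝ) + τ ≠ 0 := by linarith
    have h : HasDerivAt (fun t : ℝ => (1 + t) ^ (-(i + 1) : ℤ))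
        ((-(i + 1) : ℤ) * (1 + τ) ^ ((-(i + 1) : ℤ) - 1)) τ := by
      simpa [Function.comp_def] using (hasDerivAt_zpow (-(i + 1) : ℤ) (1 + τ) (Or.inl h0)).comp τ
        ((hasDerivAt_id τ).const_add 1)
    rw [deriv_const_mul _ h.differentiableAt, h.deriv]
    have : ((-(i + 1) : ℤ) : ℝ) = -(i + 1 : ℝ) := by push_cast; ring
    rw [show ((-(i + 1) : ℤ) - 1) = (-((i : ℤ) + 1 + 1)) by ring]
    push_cast [Nat.factorial_succ]
    ring

lemma iter_log_sub : ∀ (i : ℕ) (τ : ℝ), τ < 1 →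
    iteratedDeriv (i + 1) (fun t => Real.log (1 - t)) τ
      = -(Nat.factorial i : ℝ) * (1 - τ) ^ (-(i + 1) : ℤ) := by
  intro i
  induction i with
  | zero =>
    intro τ hτ
    have h0 : (1 : ℝ) - τ ≠ 0 := by linarith
    have h : HasDerivAt (fun t : ℝ => Real.log (1 - t)) (-1 / (1 - τ)) τ := by
      simpa using (((hasDerivAt_id τ).const_sub 1).log h0)
    rw [iteratedDeriv_one, h.deriv]
    simp [zpow_neg]
    ring
  | succ i ih =>
    intro τ hτ
    have he : iteratedDeriv (i + 1) (fun t => Real.log (1 - t)) =ᶠ[𝓝 τ]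
        fun t => -(Nat.factorial i : ℝ) * (1 - t) ^ (-(i + 1) : ℤ) := by
      filter_upwards [Iio_mem_nhds hτ] with y hy
      exact ih y hy
    rw [iteratedDeriv_succ, he.deriv_eq]
    have h0 : (1 : ℝ) - τ ≠ 0 := by linarith
    have h : HasDerivAt (fun t : ℝ => (1 - t) ^ (-(i + 1) : ℤ))
        (((-(i + 1) : ℤ) * (1 - τ) ^ ((-(i + 1) : ℤ) - 1)) * (-1)) τ := by
      exact (hasDerivAt_zpow (-(i + 1) : ℤ) (1 - τ) (Or.inl h0)).comp τ
        (by simpa using (hasDerivAt_id τ).const_sub 1)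
    rw [deriv_const_mul _ h.differentiableAt, h.deriv]
    rw [show ((-(i + 1) : ℤ) - 1) = (-((i : ℤ) + 1 + 1)) by ring]
    push_cast [Nat.factorial_succ]
    ring

lemma pascal_sum (n : ℕ) (A B : ℕ → ℝ) :
    ∑ i ∈ Finset.range (n + 1),
        (n.choose i : ℝ) * (A (i + 1) * B (n - i) + A i * B (n - i + 1))
      = ∑ i ∈ Finset.range (n + 2), ((n + 1).choose i : ℝ) * (A i * B (n + 1 - i)) := by
  have hrhs : ∑ i ∈ Finset.range (n + 2), ((n + 1).choose i : ℝ) * (A i * B (n + 1 - i))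
      = (∑ i ∈ Finset.range (n + 1), ((n + 1).choose (i + 1) : ℝ) * (A (i + 1) * B (n - i)))
        + A 0 * B (n + 1) := by
    rw [Finset.sum_range_succ']
    simp
  rw [hrhs]
  have hsplit : ∑ i ∈ Finset.range (n + 1),
      (n.choose i : ℝ) * (A (i + 1) * B (n - i) + A i * B (n - i + 1))
      = (∑ i ∈ Finset.range (n + 1), (n.choose i : ℝ) * (A (i + 1) * B (n - i)))
        + ∑ i ∈ Finset.range (n + 1), (n.choose i : ℝ) * (A i * B (n - i + 1)) := by
    rw [← Finset.sum_add_distrib]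
    exact Finset.sum_congr rfl fun i _ => by ring
  rw [hsplit]
  have h2 : ∑ i ∈ Finset.range (n + 1), (n.choose i : ℝ) * (A i * B (n - i + 1))
      = (∑ i ∈ Finset.range (n + 1), (n.choose (i + 1) : ℝ) * (A (i + 1) * B (n - i)))
        + A 0 * B (n + 1) := by
    rw [Finset.sum_range_succ' (fun i => (n.choose i : ℝ) * (A i * B (n - i + 1))),
      Finset.sum_range_succ (fun i => (n.choose (i + 1) : ℝ) * (A (i + 1) * B (n - i)))]
    have hz : (n.choose (n + 1) : ℝ) = 0 := by
      simp [Nat.choose_eq_zero_of_lt (Nat.lt_succ_self n)]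
    rw [hz, zero_mul, add_zero]
    congr 1
    · refine Finset.sum_congr rfl fun i hi => ?_
      rw [Finset.mem_range] at hi
      congr 3
      omega
    · simp
  rw [h2, ← add_assoc, ← Finset.sum_add_distrib]
  congr 1
  refine Finset.sum_congr rfl fun i hi => ?_
  rw [Nat.choose_succ_succ]
  push_cast
  ring

lemma leibniz_open {s : Set ℝ} (hs : IsOpen s) {f g : ℝ → ℝ}
    (hf : ContDiff ℝ ∞ f) (hg : ContDiffOn ℝ ∞ g s) (n : ℕ) :
    ∀ x ∈ s, iteratedDeriv n (fun t => f t * g t) x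
      = ∑ i ∈ Finset.range (n + 1),
          (n.choose i : ℝ) * (iteratedDeriv i f x * iteratedDeriv (n - i) g x) := by
  induction n with
  | zero => intro x hx; simp
  | succ n ih =>
    intro x hx
    have he : iteratedDeriv n (fun t => f t * g t) =ᶠ[𝓝 x]
        fun y => ∑ i ∈ Finset.range (n + 1),
          (n.choose i : ℝ) * (iteratedDeriv i f y * iteratedDeriv (n - i) g y) :=
      Filter.eventuallyEq_of_mem (hs.mem_nhds hx) fun y hy => ih y hy
    rw [iteratedDeriv_succ, he.deriv_eq]
    have hterm : ∀ i ∈ Finset.range (n + 1), HasDerivAt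
        (fun y => (n.choose i : ℝ) * (iteratedDeriv i f y * iteratedDeriv (n - i) g y))
        ((n.choose i : ℝ) * (iteratedDeriv (i + 1) f x * iteratedDeriv (n - i) g x
          + iteratedDeriv i f x * iteratedDeriv (n - i + 1) g x)) x := by
      intro i _
      have hfd : HasDerivAt (iteratedDeriv i f) (iteratedDeriv (i + 1) f x) x := by
        rw [iteratedDeriv_succ]
        exact ((hf.differentiable_iteratedDeriv i
          (by exact_mod_cast WithTop.coe_lt_top _)) x).hasDerivAt
      have hgd : HasDerivAt (iteratedDeriv (n - i) g) (iteratedDeriv (n - i + 1) g x) x := by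
        rw [iteratedDeriv_succ]
        exact (diffAt_iteratedDeriv hs hg (n - i) hx).hasDerivAt
      exact (hfd.mul hgd).const_mul _
    have hsum := HasDerivAt.fun_sum hterm
    rw [hsum.deriv]
    have := pascal_sum n (fun i => iteratedDeriv i f x) (fun j => iteratedDeriv j g x)
    rw [this]

lemma iteratedDeriv_sub_open {s : Set ℝ} (hs : IsOpen s) {f g : ℝ → ℝ}
    (hf : ContDiffOn ℝ ∞ f s) (hg : ContDiffOn ℝ ∞ g s) (n : ℕ) {x : ℝ} (hx : x ∈ s) :
    iteratedDeriv n (fun t => f t - g t) x = iteratedDeriv n f x - iteratedDeriv n g x := by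
  rw [← iteratedDerivWithin_of_isOpen' hs _ n hx, ← iteratedDerivWithin_of_isOpen' hs f n hx,
    ← iteratedDerivWithin_of_isOpen' hs g n hx]
  exact iteratedDerivWithin_sub hx hs.uniqueDiffOn
    ((hf.contDiffWithinAt hx).of_le (by exact_mod_cast le_top)) ((hg.contDiffWithinAt hx).of_le (by exact_mod_cast le_top))

lemma iteratedDeriv_const_mul_open {s : Set ℝ} (hs : IsOpen s) {f : ℝ → ℝ} (c : ℝ)
    (hf : ContDiffOn ℝ ∞ f s) (n : ℕ) {x : ℝ} (hx : x ∈ s) :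
    iteratedDeriv n (fun t => c * f t) x = c * iteratedDeriv n f x := by
  rw [← iteratedDerivWithin_of_isOpen' hs _ n hx, ← iteratedDerivWithin_of_isOpen' hs f n hx]
  exact iteratedDerivWithin_const_mul hx hs.uniqueDiffOn c ((hf.contDiffWithinAt hx).of_le (by exact_mod_cast le_top))

/-- Leibniz formula for the `p`-th derivative of `q_ν` on `(-1,1)`. -/
theorem stmt_12 (p ν : ℕ) (hν : 1 ≤ ν) (τ : ℝ) (hτ : τ ∈ Set.Ioo (-1 : ℝ) 1) :
    iteratedDeriv p (legendreQ ν) τ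
      = (1 / 2) * iteratedDeriv p (legendreP ν) τ * Real.log ((1 + τ) / (1 - τ))
        + (1 / 2) * ∑ i ∈ Finset.Icc 1 p,
            (Nat.choose p i : ℝ) * (Nat.factorial (i - 1) : ℝ) *
              ((-1 : ℝ) ^ (i - 1) * (1 + τ) ^ (-(i : ℤ)) + (1 - τ) ^ (-(i : ℤ))) *
              iteratedDeriv (p - i) (legendreP ν) τ
        - iteratedDeriv p (legendreW ν) τ := by
  set s : Set ℝ := Set.Ioo (-1 : ℝ) 1 with hs_def
  have hs : IsOpen s := isOpen_Ioo
  set L : ℝ → ℝ := fun t => Real.log (1 + t) - Real.log (1 - t) with hL_def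
  have hlog1 : ContDiffOn ℝ ∞ (fun t : ℝ => Real.log (1 + t)) s :=
    ContDiffOn.log (contDiff_const.add contDiff_id).contDiffOn
      (fun x hx => by have := hx.1; dsimp; linarith)
  have hlog2 : ContDiffOn ℝ ∞ (fun t : ℝ => Real.log (1 - t)) s :=
    ContDiffOn.log (contDiff_const.sub contDiff_id).contDiffOn
      (fun x hx => by have := hx.2; dsimp; linarith)
  have hL : ContDiffOn ℝ ∞ L s := hlog1.sub hlog2
  have hPL : ContDiffOn ℝ ∞ (fun t => legendreP ν t * L t) s :=
    (contDiff_legendreP ν).contDiffOn.mul hL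
  -- iterated derivatives of L at points of s
  have hLiter : ∀ (j : ℕ) (x : ℝ), x ∈ s → iteratedDeriv (j + 1) L x
      = (Nat.factorial j : ℝ) * ((-1 : ℝ) ^ j * (1 + x) ^ (-(j + 1) : ℤ)
        + (1 - x) ^ (-(j + 1) : ℤ)) := by
    intro j x hx
    have h1 := iteratedDeriv_sub_open hs hlog1 hlog2 (j + 1) hx
    rw [hL_def]
    rw [h1, iter_log_add j x hx.1, iter_log_sub j x hx.2]
    ring
  -- rewrite legendreQ on s
  have hEq : Set.EqOn (legendreQ ν)
      (fun t => (1 / 2 : ℝ) * (legendreP ν t * L t) - legendreW ν t) s := by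
    intro t ht
    have h1 : (1 : ℝ) + t ≠ 0 := by have := ht.1; linarith
    have h2 : (1 : ℝ) - t ≠ 0 := by have := ht.2; linarith
    simp only [legendreQ, hL_def, Real.log_div h1 h2]
    ring
  rw [hEq.iteratedDeriv_of_isOpen hs p hτ]
  have hQ' : iteratedDeriv p (fun t => (1 / 2 : ℝ) * (legendreP ν t * L t) - legendreW ν t) τ
      = (1 / 2 : ℝ) * iteratedDeriv p (fun t => legendreP ν t * L t) τ
        - iteratedDeriv p (legendreW ν) τ := by
    rw [iteratedDeriv_sub_open hs (ContDiffOn.mul contDiffOn_const hPL)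
      (contDiff_legendreW ν).contDiffOn p hτ,
      iteratedDeriv_const_mul_open hs (1/2 : ℝ) hPL p hτ]
  rw [hQ', leibniz_open hs (contDiff_legendreP ν) hL p τ hτ]
  have h3 : ∑ i ∈ Finset.range (p + 1), (p.choose i : ℝ) *
        (iteratedDeriv i (legendreP ν) τ * iteratedDeriv (p - i) L τ)
      = ∑ j ∈ Finset.range (p + 1), (p.choose j : ℝ) *
        (iteratedDeriv (p - j) (legendreP ν) τ * iteratedDeriv j L τ) := by
    rw [← Finset.sum_range_reflect (fun j => (p.choose j : ℝ) *
      (iteratedDeriv (p - j) (legendreP ν) τ * iteratedDeriv j L τ)) (p + 1)]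
    refine Finset.sum_congr rfl fun j hj => ?_
    rw [Finset.mem_range] at hj
    have hj' : j ≤ p := Nat.lt_succ_iff.mp hj
    have e1 : p + 1 - 1 - j = p - j := by omega
    have e2 : p - (p - j) = j := by omega
    rw [e1, e2, Nat.choose_symm hj']
  rw [h3, Finset.sum_range_succ' (fun j => (p.choose j : ℝ) *
    (iteratedDeriv (p - j) (legendreP ν) τ * iteratedDeriv j L τ)) p]
  have h0 : (1 : ℝ) + τ ≠ 0 := by have := hτ.1; linarith
  have h0' : (1 : ℝ) - τ ≠ 0 := by have := hτ.2; linarith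
  have hG0 : (p.choose 0 : ℝ) * (iteratedDeriv (p - 0) (legendreP ν) τ * iteratedDeriv 0 L τ)
      = iteratedDeriv p (legendreP ν) τ * Real.log ((1 + τ) / (1 - τ)) := by
    simp only [Nat.choose_zero_right, Nat.cast_one, one_mul, Nat.sub_zero, iteratedDeriv_zero,
      hL_def, Real.log_div h0 h0']
  rw [hG0]
  have hIcc : ∑ i ∈ Finset.Icc 1 p,
      (p.choose i : ℝ) * (Nat.factorial (i - 1) : ℝ) *
        ((-1 : ℝ) ^ (i - 1) * (1 + τ) ^ (-(i : ℤ)) + (1 - τ) ^ (-(i : ℤ))) *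
        iteratedDeriv (p - i) (legendreP ν) τ
      = ∑ j ∈ Finset.range p,
        (p.choose (1 + j) : ℝ) * (Nat.factorial (1 + j - 1) : ℝ) *
          ((-1 : ℝ) ^ (1 + j - 1) * (1 + τ) ^ (-((1 + j : ℕ) : ℤ)) + (1 - τ) ^ (-((1 + j : ℕ) : ℤ))) *
          iteratedDeriv (p - (1 + j)) (legendreP ν) τ := by
    rw [← Finset.Ico_add_one_right_eq_Icc, Finset.sum_Ico_eq_sum_range]
    simp only [Nat.add_sub_cancel]
  rw [hIcc]
  have hterm : ∀ j ∈ Finset.range p,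
      (p.choose (j + 1) : ℝ) * (iteratedDeriv (p - (j + 1)) (legendreP ν) τ *
        iteratedDeriv (j + 1) L τ)
      = (p.choose (1 + j) : ℝ) * (Nat.factorial (1 + j - 1) : ℝ) *
          ((-1 : ℝ) ^ (1 + j - 1) * (1 + τ) ^ (-((1 + j : ℕ) : ℤ)) + (1 - τ) ^ (-((1 + j : ℕ) : ℤ))) *
          iteratedDeriv (p - (1 + j)) (legendreP ν) τ := by
    intro j _
    rw [hLiter j τ hτ]
    have e1 : 1 + j = j + 1 := by omega
    rw [e1]
    simp only [Nat.add_sub_cancel]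
    have e3 : (-((j + 1 : ℕ) : ℤ)) = (-((j : ℤ) + 1) : ℤ) := by push_cast; ring
    rw [e3]
    ring
  rw [Finset.sum_congr rfl hterm]
  ring
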